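/- arXiv:1305.2428 — 2 statements merged into one kernel-verified Lean document; each statement's English description precedes it below -/
import Mathlib

section
/- For every integer N ≥ 1, ∑_{k | N, k > 0} (N/k) · φ((k, N/k)) / (k, N/k) = ψ(N), where ψ(N) = N ∏_{p | N} (1 + 1/p) is the Dedekind psi function, φ is Euler's totient function, and (a,b) denotes gcd. -/
open Finset

/-- The Dedekind psi function `ψ(N) = N ∏_{p ∣ N} (1 + 1/p)`, valued in `ℚ`. -/
noncomputable def dedekindPsi (N : ℕ) : ℚ :=
  N * ∏ p ∈ N.primeFactors, (1 + 1 / (p : ℚ))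

/-- The summand, as a function of a pair `(k, m)` with `k * m = N`. -/
def psiTerm (k m : ℕ) : ℕ := (m / Nat.gcd k m) * Nat.totient (Nat.gcd k m)

/-- The left-hand side as a sum over the divisors antidiagonal. -/
def psiSum (n : ℕ) : ℕ := ∑ x ∈ n.divisorsAntidiagonal, psiTerm x.1 x.2

lemma gcd_pow_pow (p a b : ℕ) : Nat.gcd (p ^ a) (p ^ b) = p ^ min a b := by
  rcases le_total a b with h | h
  · rw [min_eq_left h, Nat.gcd_eq_left (pow_dvd_pow p h)]
  · rw [min_eq_right h, Nat.gcd_eq_right (pow_dvd_pow p h)]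

lemma psiTerm_mul {a1 a2 b1 b2 : ℕ} (cop : (a1 * a2).Coprime (b1 * b2)) :
    psiTerm (a1 * b1) (a2 * b2) = psiTerm a1 a2 * psiTerm b1 b2 := by
  have h12 : a1.Coprime b1 := cop.coprime_mul_right.coprime_mul_right_right
  have h22 : a2.Coprime b2 := cop.coprime_mul_left.coprime_mul_left_right
  have h1b2 : a1.Coprime b2 := cop.coprime_mul_right.coprime_mul_left_right
  have h2b1 : a2.Coprime b1 := cop.coprime_mul_left.coprime_mul_right_right
  have hg : Nat.gcd (a1 * b1) (a2 * b2) = Nat.gcd a1 a2 * Nat.gcd b1 b2 := by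
    rw [Nat.Coprime.gcd_mul _ h22]
    rw [Nat.gcd_comm (a1 * b1) a2, Nat.Coprime.gcd_mul _ h12,
      Nat.gcd_comm (a1 * b1) b2, Nat.Coprime.gcd_mul _ h12]
    rw [Nat.Coprime.gcd_eq_one h2b1, Nat.Coprime.gcd_eq_one h1b2.symm,
      Nat.gcd_comm a2 a1, Nat.gcd_comm b2 b1]
    ring
  have hgcop : (Nat.gcd a1 a2).Coprime (Nat.gcd b1 b2) :=
    Nat.Coprime.coprime_dvd_left (Nat.gcd_dvd_left _ _)
      (Nat.Coprime.coprime_dvd_right (Nat.gcd_dvd_left _ _) h12)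
  unfold psiTerm
  rw [hg, Nat.totient_mul hgcop,
    ← Nat.div_mul_div_comm (Nat.gcd_dvd_right a1 a2) (Nat.gcd_dvd_right b1 b2)]
  ring

lemma psiSum_mul {m n : ℕ} (cop : m.Coprime n) :
    psiSum (m * n) = psiSum m * psiSum n := by
  unfold psiSum
  rw [sum_mul_sum, ← sum_product']
  symm
  apply sum_nbij fun ((i, j), k, l) ↦ (i * k, j * l)
  · rintro ⟨⟨a1, a2⟩, ⟨b1, b2⟩⟩ h
    simp only [Nat.mem_divisorsAntidiagonal, Ne, mem_product] at h
    rcases h with ⟨⟨rfl, ha⟩, ⟨rfl, hb⟩⟩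
    simp only [Nat.mem_divisorsAntidiagonal, Nat.mul_eq_zero, Ne]
    constructor
    · ring
    rw [Nat.mul_eq_zero] at *
    exact not_or_intro ha hb
  · simp only [Set.InjOn, mem_coe, Nat.mem_divisorsAntidiagonal, Ne, mem_product,
      Prod.mk.injEq]
    rintro ⟨⟨a1, a2⟩, ⟨b1, b2⟩⟩ ⟨⟨rfl, ha⟩, ⟨rfl, hb⟩⟩ ⟨⟨c1, c2⟩, ⟨d1, d2⟩⟩ hcd h
    simp only [Prod.mk.injEq] at h
    ext <;> dsimp only
    · trans Nat.gcd (a1 * a2) (a1 * b1)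
      · rw [Nat.gcd_mul_left, cop.coprime_mul_left.coprime_mul_right_right.gcd_eq_one, mul_one]
      · rw [← hcd.1.1, ← hcd.2.1] at cop
        rw [← hcd.1.1, h.1, Nat.gcd_mul_left,
          cop.coprime_mul_left.coprime_mul_right_right.gcd_eq_one, mul_one]
    · trans Nat.gcd (a1 * a2) (a2 * b2)
      · rw [mul_comm, Nat.gcd_mul_left, cop.coprime_mul_right.coprime_mul_left_right.gcd_eq_one,
          mul_one]
      · rw [← hcd.1.1, ← hcd.2.1] at cop
        rw [← hcd.1.1, h.2, mul_comm, Nat.gcd_mul_left,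
          cop.coprime_mul_right.coprime_mul_left_right.gcd_eq_one, mul_one]
    · trans Nat.gcd (b1 * b2) (a1 * b1)
      · rw [mul_comm, Nat.gcd_mul_right,
          cop.coprime_mul_right.coprime_mul_left_right.symm.gcd_eq_one, one_mul]
      · rw [← hcd.1.1, ← hcd.2.1] at cop
        rw [← hcd.2.1, h.1, mul_comm c1 d1, Nat.gcd_mul_left,
          cop.coprime_mul_right.coprime_mul_left_right.symm.gcd_eq_one, mul_one]
    · trans Nat.gcd (b1 * b2) (a2 * b2)
      · rw [Nat.gcd_mul_right, cop.coprime_mul_left.coprime_mul_right_right.symm.gcd_eq_one,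
          one_mul]
      · rw [← hcd.1.1, ← hcd.2.1] at cop
        rw [← hcd.2.1, h.2, Nat.gcd_mul_right,
          cop.coprime_mul_left.coprime_mul_right_right.symm.gcd_eq_one, one_mul]
  · simp only [Set.SurjOn, Set.subset_def, mem_coe, Nat.mem_divisorsAntidiagonal, Ne, mem_product,
      Set.mem_image, exists_prop, Prod.mk.injEq]
    rintro ⟨b1, b2⟩ h
    dsimp at h
    use ((b1.gcd m, b2.gcd m), (b1.gcd n, b2.gcd n))
    rw [← cop.gcd_mul _, ← cop.gcd_mul _, ← h.1, Nat.gcd_mul_gcd_of_coprime_of_mul_eq_mul cop h.1,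
      Nat.gcd_mul_gcd_of_coprime_of_mul_eq_mul cop.symm _]
    · rw [Nat.mul_eq_zero, not_or] at h
      simp [h.2.1, h.2.2]
    rw [mul_comm n m, h.1]
  · simp only [Nat.mem_divisorsAntidiagonal, Ne, mem_product]
    rintro ⟨⟨a1, a2⟩, ⟨b1, b2⟩⟩ ⟨⟨rfl, ha⟩, ⟨rfl, hb⟩⟩
    dsimp only
    exact (psiTerm_mul cop).symm

lemma sum_totient_pow {p : ℕ} (hp : p.Prime) (J : ℕ) :
    ∑ j ∈ range (J + 1), Nat.totient (p ^ j) = p ^ J := by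
  have := Nat.sum_divisors_prime_pow (f := Nat.totient) (k := J) hp
  rw [← this, Nat.sum_totient]

lemma first_chunk {p : ℕ} (hp : p.Prime) :
    ∀ (h e : ℕ), 2 * h ≤ e →
      (∑ i ∈ range (h + 1), p ^ (e - 2 * i) * Nat.totient (p ^ i)) + p ^ (e - h - 1)
        = p ^ e + p ^ (e - 1) := by
  intro h
  induction h with
  | zero =>
    intro e _
    simp
  | succ h ih =>
    intro e he
    rw [sum_range_succ, add_assoc]
    have h1 : p ^ (e - 2 * (h + 1)) * Nat.totient (p ^ (h + 1)) + p ^ (e - (h + 1) - 1)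
        = p ^ (e - h - 1) := by
      rw [Nat.totient_prime_pow hp (Nat.succ_pos h)]
      have hexp1 : e - 2 * (h + 1) + (h + 1 - 1) = e - (h + 1) - 1 := by omega
      rw [← mul_assoc, ← pow_add, hexp1]
      have hps : p - 1 + 1 = p := Nat.succ_pred_eq_of_pos hp.pos
      calc p ^ (e - (h + 1) - 1) * (p - 1) + p ^ (e - (h + 1) - 1)
          = p ^ (e - (h + 1) - 1) * (p - 1 + 1) := by ring
        _ = p ^ (e - (h + 1) - 1) * p := by rw [hps]
        _ = p ^ (e - h - 1) := by rw [← pow_succ]; congr 1; omega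
    rw [h1]
    exact ih e (by omega)

lemma psiSum_prime_pow {p : ℕ} (hp : p.Prime) (e : ℕ) (he : 1 ≤ e) :
    psiSum (p ^ e) = p ^ e + p ^ (e - 1) := by
  have hp1 : 1 < p := hp.one_lt
  unfold psiSum
  rw [Nat.sum_divisorsAntidiagonal (f := fun k m => psiTerm k m)]
  rw [Nat.sum_divisors_prime_pow hp]
  have hterm : ∀ i ∈ range (e + 1), psiTerm (p ^ i) (p ^ e / p ^ i)
      = if 2 * i ≤ e then p ^ (e - 2 * i) * Nat.totient (p ^ i)
        else Nat.totient (p ^ (e - i)) := by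
    intro i hi
    rw [mem_range] at hi
    have hie : i ≤ e := by omega
    rw [Nat.pow_div hie (by omega)]
    unfold psiTerm
    rw [gcd_pow_pow]
    by_cases h2 : 2 * i ≤ e
    · have : min i (e - i) = i := by omega
      rw [this, if_pos h2, Nat.pow_div (by omega) (by omega)]
      congr 2
      omega
    · have : min i (e - i) = e - i := by omega
      rw [this, if_neg h2, Nat.div_self (Nat.pow_pos (by omega)), one_mul]
  rw [sum_congr rfl hterm]
  set h := e / 2 with hh
  have hsplit : range (e + 1) = range (h + 1) ∪ Ico (h + 1) (e + 1) := by
    rw [range_eq_Ico, range_eq_Ico, Finset.Ico_union_Ico_eq_Ico] <;> omega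
  rw [hsplit, sum_union (by
    rw [range_eq_Ico]
    exact Finset.Ico_disjoint_Ico_consecutive 0 (h + 1) (e + 1))]
  have hA : ∑ i ∈ range (h + 1),
      (if 2 * i ≤ e then p ^ (e - 2 * i) * Nat.totient (p ^ i)
        else Nat.totient (p ^ (e - i)))
      = ∑ i ∈ range (h + 1), p ^ (e - 2 * i) * Nat.totient (p ^ i) := by
    apply sum_congr rfl
    intro i hi
    rw [mem_range] at hi
    rw [if_pos (by omega)]
  have hB : ∑ i ∈ Ico (h + 1) (e + 1),
      (if 2 * i ≤ e then p ^ (e - 2 * i) * Nat.totient (p ^ i)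
        else Nat.totient (p ^ (e - i)))
      = p ^ (e - h - 1) := by
    have : ∀ i ∈ Ico (h + 1) (e + 1),
        (if 2 * i ≤ e then p ^ (e - 2 * i) * Nat.totient (p ^ i)
          else Nat.totient (p ^ (e - i))) = Nat.totient (p ^ (e - i)) := by
      intro i hi
      rw [mem_Ico] at hi
      rw [if_neg (by omega)]
    rw [sum_congr rfl this]
    have hre : ∑ i ∈ Ico (h + 1) (e + 1), Nat.totient (p ^ (e - i))
        = ∑ j ∈ range (e - h), Nat.totient (p ^ j) := by
      apply Finset.sum_nbij' (fun i => e - i) (fun j => e - j)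
      · intro a ha; rw [mem_Ico] at ha; rw [mem_range]; omega
      · intro a ha; rw [mem_range] at ha; rw [mem_Ico]; omega
      · intro a ha; rw [mem_Ico] at ha; omega
      · intro a ha; rw [mem_range] at ha; omega
      · intro a _; rfl
    rw [hre]
    have : e - h = (e - h - 1) + 1 := by omega
    rw [this, sum_totient_pow hp]
    congr 1
  rw [hA, hB]
  exact first_chunk hp h e (by omega)

lemma dedekindPsi_prime_pow {p : ℕ} (hp : p.Prime) (e : ℕ) (he : 1 ≤ e) :
    dedekindPsi (p ^ e) = (p : ℚ) ^ e + (p : ℚ) ^ (e - 1) := by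
  unfold dedekindPsi
  rw [Nat.primeFactors_prime_pow (by omega) hp, prod_singleton]
  have hp0 : (p : ℚ) ≠ 0 := Nat.cast_ne_zero.mpr hp.pos.ne'
  have hpe : (p : ℚ) ^ e = (p : ℚ) ^ (e - 1) * p := by
    rw [← pow_succ]; congr 1; omega
  push_cast
  rw [hpe]
  field_simp

lemma dedekindPsi_mul {m n : ℕ} (hm : m ≠ 0) (hn : n ≠ 0) (cop : m.Coprime n) :
    dedekindPsi (m * n) = dedekindPsi m * dedekindPsi n := by
  unfold dedekindPsi
  rw [Nat.primeFactors_mul hm hn, prod_union (Nat.Coprime.disjoint_primeFactors cop)]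
  push_cast
  ring

lemma psiSum_eq (N : ℕ) : ∀ hN : 1 ≤ N, (psiSum N : ℚ) = dedekindPsi N := by
  induction N using Nat.recOnPosPrimePosCoprime with
  | prime_pow p n hp hn =>
    intro _
    rw [psiSum_prime_pow hp n hn, dedekindPsi_prime_pow hp n hn]
    push_cast
    ring
  | zero => intro h; omega
  | one =>
    intro _
    have : psiSum 1 = 1 := by decide
    rw [this]
    unfold dedekindPsi
    simp
  | coprime a b ha hb cop iha ihb =>
    intro _
    rw [psiSum_mul cop, dedekindPsi_mul (by omega) (by omega) cop]
    push_cast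
    rw [iha (by omega), ihb (by omega)]

/-- `∑_{k ∣ N} (N/k) · φ((k, N/k)) / (k, N/k) = ψ(N)`. -/
theorem sum_divisors_eq_dedekindPsi (N : ℕ) (hN : 1 ≤ N) :
    ((∑ k ∈ N.divisors, (N / (k * Nat.gcd k (N / k))) * Nat.totient (Nat.gcd k (N / k)) : ℕ) : ℚ)
      = dedekindPsi N := by
  rw [← psiSum_eq N hN]
  congr 1
  unfold psiSum
  rw [Nat.sum_divisorsAntidiagonal (f := fun k m => psiTerm k m)]
  apply sum_congr rfl
  intro k hk
  unfold psiTerm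
  rw [Nat.div_div_eq_div_mul]
end

section
/- The number of inequivalent cusps of Γ0(N) equals ∑_{d | N, d > 0} φ(gcd(d, N/d)), where φ is Euler's totient function. -/
/-- Cusps of `Γ₀(N)` are `Γ₀(N)`-orbits of primitive vectors `(p, q) ∈ ℤ²`
(this is the same as orbits on `ℙ¹(ℚ) = ℚ ∪ {∞}` since `-1 ∈ Γ₀(N)`). -/
def cuspRel (N : ℕ) (v w : {v : ℤ × ℤ // IsCoprime v.1 v.2}) : Prop :=
  ∃ γ ∈ CongruenceSubgroup.Gamma0 N,
    ((γ : Matrix.SpecialLinearGroup (Fin 2) ℤ) : Matrix (Fin 2) (Fin 2) ℤ).mulVec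
        ![v.1.1, v.1.2] = ![w.1.1, w.1.2]

namespace CuspCount

lemma isUnit_intCast_of_isCoprime {x : ℤ} {n : ℕ} (h : IsCoprime x (n : ℤ)) :
    IsUnit ((x : ZMod n)) := by
  have h2 := h.map (Int.castRingHom (ZMod n))
  simp only [Int.coe_castRingHom, Int.cast_natCast, ZMod.natCast_self] at h2
  exact isCoprime_zero_right.mp h2

lemma exists_shift_coprime (w m : ℤ) (n : ℕ) (hw : IsCoprime w m) (hm : m ≠ 0) (hn : n ≠ 0) :
    ∃ t : ℤ, IsCoprime (w + t * m) (n : ℤ) := by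
  set M := m.natAbs with hM
  have hM0 : M ≠ 0 := Int.natAbs_ne_zero.mpr hm
  haveI : NeZero (M * n) := ⟨Nat.mul_ne_zero hM0 hn⟩
  haveI : NeZero M := ⟨hM0⟩
  have hgcd : Int.gcd w (M : ℤ) = 1 := by
    rw [Int.isCoprime_iff_gcd_eq_one] at hw
    simpa [Int.gcd] using hw
  have hwM : IsUnit ((w : ZMod M)) :=
    isUnit_intCast_of_isCoprime (Int.isCoprime_iff_gcd_eq_one.mpr hgcd)
  obtain ⟨u, hu⟩ := ZMod.unitsMap_surjective (Dvd.intro n rfl : M ∣ M * n) hwM.unit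
  set x : ℕ := (u : ZMod (M * n)).val with hxdef
  have hx : Nat.Coprime x (M * n) := ZMod.val_coe_unit_coprime u
  have key : ((x : ℤ) : ZMod M) = (w : ZMod M) := by
    have h3 := congrArg (fun (z : (ZMod M)ˣ) => (z : ZMod M)) hu
    simp only [ZMod.unitsMap_def, Units.coe_map, MonoidHom.coe_coe, ZMod.castHom_apply,
      IsUnit.unit_spec] at h3
    rw [← h3, hxdef]
    push_cast
    rw [ZMod.natCast_val]
  have hdvd : ((M : ℤ)) ∣ (x : ℤ) - w := by
    rw [ZMod.intCast_eq_intCast_iff] at key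
    exact (Int.ModEq.dvd key.symm)
  obtain ⟨s, hs⟩ := hdvd
  have hxn : Nat.Coprime x n := hx.coprime_dvd_right (dvd_mul_left n M)
  have hint : IsCoprime ((x : ℤ)) ((n : ℤ)) := by
    rw [Int.isCoprime_iff_gcd_eq_one]
    simpa [Int.gcd] using hxn
  rcases Int.natAbs_eq m with h | h
  · refine ⟨s, ?_⟩
    have he : w + s * m = (x : ℤ) := by rw [← hM] at h; rw [h]; linarith
    rwa [he]
  · refine ⟨-s, ?_⟩
    have he : w + (-s) * m = (x : ℤ) := by rw [← hM] at h; rw [h]; linarith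
    rwa [he]

lemma image_isCoprime {a c a' c' x y z w : ℤ} (hv : IsCoprime a c)
    (hdet : x * w - y * z = 1) (h1 : x * a + y * c = a') (h2 : z * a + w * c = c') :
    IsCoprime a' c' := by
  obtain ⟨s, t, hst⟩ := hv
  exact ⟨s * w - t * z, t * x - s * y, by
    rw [← h1, ← h2]; linear_combination (s * a + t * c) * hdet + hst⟩

abbrev Prim := {v : ℤ × ℤ // IsCoprime v.1 v.2}

variable (N : ℕ)

/-- the invariant `gcd(c, N)` -/
def dd (c : ℤ) : ℕ := Int.gcd c N

lemma dd_dvd (c : ℤ) : dd N c ∣ N := by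
  have := Int.gcd_dvd_right (a := c) (b := (N : ℤ))
  exact_mod_cast this

lemma dd_dvd_left (c : ℤ) : ((dd N c : ℕ) : ℤ) ∣ c := Int.gcd_dvd_left c (N : ℤ)

lemma dd_ne_zero (hN : N ≠ 0) (c : ℤ) : dd N c ≠ 0 := by
  intro h
  rw [dd, Int.gcd_eq_zero_iff] at h
  exact hN (by exact_mod_cast h.2)

lemma dd_natCast {d : ℕ} (hdN : d ∣ N) : dd N ((d : ℕ) : ℤ) = d := by
  rw [dd, Int.gcd_natCast_natCast, Nat.gcd_eq_left hdN]

lemma N_eq (c : ℤ) : (N : ℤ) = (dd N c : ℤ) * ((N / dd N c : ℕ) : ℤ) := by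
  exact_mod_cast (Nat.mul_div_cancel' (dd_dvd N c)).symm

lemma c_eq (c : ℤ) : c = ((dd N c : ℕ) : ℤ) * (c / ((dd N c : ℕ) : ℤ)) :=
  (Int.mul_ediv_cancel' (dd_dvd_left N c)).symm

lemma cop_c1_n1 (hN : N ≠ 0) (c : ℤ) :
    IsCoprime (c / ((dd N c : ℕ) : ℤ)) ((N / dd N c : ℕ) : ℤ) := by
  have hD0 : dd N c ≠ 0 := dd_ne_zero N hN c
  have key : dd N c * Int.gcd (c / ((dd N c : ℕ) : ℤ)) ((N / dd N c : ℕ) : ℤ) = dd N c := by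
    conv_rhs => rw [dd]
    conv_rhs => rw [c_eq N c, N_eq N c]
    rw [Int.gcd_mul_left, Int.natAbs_natCast]
  rw [Int.isCoprime_iff_gcd_eq_one]
  exact Nat.eq_of_mul_eq_mul_left (Nat.pos_of_ne_zero hD0) (by rw [key, Nat.mul_one])

lemma cop_z (hN : N ≠ 0) (v : Prim) :
    IsCoprime (v.1.1 * (v.1.2 / ((dd N v.1.2 : ℕ) : ℤ)))
      ((Nat.gcd (dd N v.1.2) (N / dd N v.1.2) : ℕ) : ℤ) := by
  apply IsCoprime.mul_left
  · refine v.2.of_isCoprime_of_dvd_right ?_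
    exact dvd_trans (by exact_mod_cast Nat.gcd_dvd_left _ _) (dd_dvd_left N v.1.2)
  · refine (cop_c1_n1 N hN v.1.2).of_isCoprime_of_dvd_right ?_
    exact_mod_cast Nat.gcd_dvd_right (dd N v.1.2) (N / dd N v.1.2)

/-- The complete invariant of a cusp. -/
noncomputable def toSig (hN : N ≠ 0) (v : Prim) :
    Σ d : {x // x ∈ N.divisors}, (ZMod (Nat.gcd d.1 (N / d.1)))ˣ :=
  ⟨⟨dd N v.1.2, Nat.mem_divisors.mpr ⟨dd_dvd N v.1.2, hN⟩⟩,
    (isUnit_intCast_of_isCoprime (cop_z N hN v)).unit⟩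

lemma sig_eq {s : Finset ℕ} {F : ℕ → ℕ} {d₁ d₂ : ℕ} (h₁ : d₁ ∈ s) (h₂ : d₂ ∈ s)
    {u₁ : (ZMod (F d₁))ˣ} {u₂ : (ZMod (F d₂))ˣ} {z₁ z₂ : ℤ}
    (hz₁ : (u₁ : ZMod (F d₁)) = ((z₁ : ℤ) : ZMod (F d₁)))
    (hz₂ : (u₂ : ZMod (F d₂)) = ((z₂ : ℤ) : ZMod (F d₂)))
    (hd : d₁ = d₂) (hz : ((F d₁ : ℕ) : ℤ) ∣ z₁ - z₂) :
    (⟨⟨d₁, h₁⟩, u₁⟩ : Σ d : {x // x ∈ s}, (ZMod (F d.1))ˣ) = ⟨⟨d₂, h₂⟩, u₂⟩ := by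
  subst hd
  have hu : u₁ = u₂ := by
    apply Units.ext
    rw [hz₁, hz₂]
    have h0 : ((z₁ - z₂ : ℤ) : ZMod (F d₁)) = 0 := by
      rw [ZMod.intCast_zmod_eq_zero_iff_dvd]; exact hz
    push_cast at h0
    exact sub_eq_zero.mp h0
  rw [hu]

lemma sig_eq_extract {s : Finset ℕ} {F : ℕ → ℕ} {d₁ d₂ : ℕ} {h₁ : d₁ ∈ s} {h₂ : d₂ ∈ s}
    {u₁ : (ZMod (F d₁))ˣ} {u₂ : (ZMod (F d₂))ˣ} {z₁ z₂ : ℤ}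
    (hz₁ : (u₁ : ZMod (F d₁)) = ((z₁ : ℤ) : ZMod (F d₁)))
    (hz₂ : (u₂ : ZMod (F d₂)) = ((z₂ : ℤ) : ZMod (F d₂)))
    (h : (⟨⟨d₁, h₁⟩, u₁⟩ : Σ d : {x // x ∈ s}, (ZMod (F d.1))ˣ) = ⟨⟨d₂, h₂⟩, u₂⟩) :
    d₁ = d₂ ∧ ((F d₁ : ℕ) : ℤ) ∣ z₁ - z₂ := by
  have hd : d₁ = d₂ := congrArg (fun p => p.1.1) h
  subst hd
  refine ⟨rfl, ?_⟩
  have hu : u₁ = u₂ := by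
    have h2 := (Sigma.mk.inj_iff.mp h).2
    exact eq_of_heq h2
  rw [← ZMod.intCast_zmod_eq_zero_iff_dvd]
  push_cast
  rw [← hz₁, ← hz₂, hu, sub_self]

lemma cuspRel_of (v w : Prim) (x y z W : ℤ) (hdet : x * W - y * (N * z) = 1)
    (h1 : x * v.1.1 + y * v.1.2 = w.1.1) (h2 : (N : ℤ) * z * v.1.1 + W * v.1.2 = w.1.2) :
    cuspRel N v w := by
  refine ⟨⟨!![x, y; (N : ℤ) * z, W], by rw [Matrix.det_fin_two_of]; linarith⟩, ?_, ?_⟩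
  · apply CongruenceSubgroup.Gamma0_mem.mpr
    simp
  · funext i
    fin_cases i <;>
      simp [Matrix.mulVec, dotProduct, Fin.sum_univ_two, ← h1, ← h2] <;> ring

lemma cuspRel_symm {v w : Prim} (h : cuspRel N v w) : cuspRel N w v := by
  obtain ⟨γ, hγ, hvec⟩ := h
  refine ⟨γ⁻¹, (CongruenceSubgroup.Gamma0 N).inv_mem hγ, ?_⟩
  rw [← hvec, Matrix.mulVec_mulVec, ← Matrix.SpecialLinearGroup.coe_mul, inv_mul_cancel]
  simp

lemma rel_d_dvd {v w : Prim} (h : cuspRel N v w) : dd N v.1.2 ∣ dd N w.1.2 := by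
  obtain ⟨γ, hγ, hvec⟩ := h
  have h2 : (γ : Matrix (Fin 2) (Fin 2) ℤ) 1 0 * v.1.1 + γ 1 1 * v.1.2 = w.1.2 := by
    have := congrFun hvec 1
    simpa [Matrix.mulVec, dotProduct, Fin.sum_univ_two, Matrix.vecHead, Matrix.vecTail] using this
  have hC : (N : ℤ) ∣ (γ : Matrix (Fin 2) (Fin 2) ℤ) 1 0 := by
    rw [CongruenceSubgroup.Gamma0_mem] at hγ
    exact_mod_cast (ZMod.intCast_zmod_eq_zero_iff_dvd _ N).mp hγ
  have hdN : ((dd N v.1.2 : ℕ) : ℤ) ∣ (N : ℤ) := by exact_mod_cast dd_dvd N v.1.2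
  have hdvd : ((dd N v.1.2 : ℕ) : ℤ) ∣ w.1.2 := by
    rw [← h2]
    exact dvd_add ((hdN.trans hC).mul_right _) ((dd_dvd_left N v.1.2).mul_left _)
  have : ((dd N v.1.2 : ℕ) : ℤ) ∣ ((dd N w.1.2 : ℕ) : ℤ) := Int.dvd_coe_gcd hdvd hdN
  exact_mod_cast this

lemma rel_d_eq {v w : Prim} (h : cuspRel N v w) : dd N v.1.2 = dd N w.1.2 :=
  Nat.dvd_antisymm (rel_d_dvd N h) (rel_d_dvd N (cuspRel_symm N h))

lemma key_arith {a c a' c' X Y C W k : ℤ} {Nn D nd g : ℕ}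
    (h1 : X * a + Y * c = a') (h2 : C * a + W * c = c')
    (hdet : X * W - Y * C = 1) (hk : C = (Nn : ℤ) * k)
    (hND : (D : ℤ) * (nd : ℤ) = (Nn : ℤ)) (hcD : (D : ℤ) * (c / (D : ℤ)) = c)
    (hD0 : (D : ℤ) ≠ 0)
    (hgD : (g : ℤ) ∣ (D : ℤ)) (hgnd : (g : ℤ) ∣ (nd : ℤ)) (hgN : (g : ℤ) ∣ (Nn : ℤ)) :
    (g : ℤ) ∣ a * (c / (D : ℤ)) - a' * (c' / (D : ℤ)) := by
  have hdet' : X * W - Y * ((Nn : ℤ) * k) = 1 := by rw [← hk]; exact hdet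
  have e : c' = (D : ℤ) * ((nd : ℤ) * k * a + W * (c / (D : ℤ))) := by
    rw [← h2, hk]; linear_combination (-(k * a)) * hND - W * hcD
  have ec'D : c' / (D : ℤ) = (nd : ℤ) * k * a + W * (c / (D : ℤ)) := by
    rw [e, Int.mul_ediv_cancel_left _ hD0]
  have expand : a * (c / (D : ℤ)) - a' * (c' / (D : ℤ)) =
      (-(Y * a * (c / (D : ℤ)) * k)) * (Nn : ℤ)
      + (-(X * k * a * a)) * (nd : ℤ)
      + (-(Y * (nd : ℤ) * k * a + Y * W * (c / (D : ℤ)))) * c := by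
    rw [← h1, ec'D]
    linear_combination (-(a * (c / (D : ℤ)))) * hdet'
  rw [expand]
  have hgc : (g : ℤ) ∣ c := hgD.trans ⟨_, hcD.symm⟩
  exact dvd_add (dvd_add (hgN.mul_left _) (hgnd.mul_left _)) (hgc.mul_left _)

lemma key_dvd (hN : N ≠ 0) {v w : Prim} (h : cuspRel N v w) (hd : dd N v.1.2 = dd N w.1.2) :
    ((Nat.gcd (dd N v.1.2) (N / dd N v.1.2) : ℕ) : ℤ) ∣
      v.1.1 * (v.1.2 / ((dd N v.1.2 : ℕ) : ℤ)) - w.1.1 * (w.1.2 / ((dd N w.1.2 : ℕ) : ℤ)) := by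
  obtain ⟨γ, hγ, hvec⟩ := h
  have h1 : (γ : Matrix (Fin 2) (Fin 2) ℤ) 0 0 * v.1.1 + γ 0 1 * v.1.2 = w.1.1 := by
    have := congrFun hvec 0
    simpa [Matrix.mulVec, dotProduct, Fin.sum_univ_two, Matrix.vecHead, Matrix.vecTail] using this
  have h2 : (γ : Matrix (Fin 2) (Fin 2) ℤ) 1 0 * v.1.1 + γ 1 1 * v.1.2 = w.1.2 := by
    have := congrFun hvec 1
    simpa [Matrix.mulVec, dotProduct, Fin.sum_univ_two, Matrix.vecHead, Matrix.vecTail] using this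
  have hdet : (γ : Matrix (Fin 2) (Fin 2) ℤ) 0 0 * γ 1 1 - γ 0 1 * γ 1 0 = 1 := by
    have := γ.2
    rwa [Matrix.det_fin_two] at this
  have hC : (N : ℤ) ∣ (γ : Matrix (Fin 2) (Fin 2) ℤ) 1 0 := by
    rw [CongruenceSubgroup.Gamma0_mem] at hγ
    exact_mod_cast (ZMod.intCast_zmod_eq_zero_iff_dvd _ N).mp hγ
  obtain ⟨k, hk⟩ := hC
  rw [← hd]
  have hD0 : ((dd N v.1.2 : ℕ) : ℤ) ≠ 0 := by
    exact_mod_cast dd_ne_zero N hN v.1.2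
  refine key_arith h1 h2 ?_ hk (N_eq N v.1.2).symm (c_eq N v.1.2).symm hD0 ?_ ?_ ?_
  · linarith [hdet]
  · exact_mod_cast Nat.gcd_dvd_left (dd N v.1.2) (N / dd N v.1.2)
  · exact_mod_cast Nat.gcd_dvd_right (dd N v.1.2) (N / dd N v.1.2)
  · exact_mod_cast (Nat.gcd_dvd_left (dd N v.1.2) (N / dd N v.1.2)).trans (dd_dvd N v.1.2)

theorem toSig_rel (hN : N ≠ 0) {v w : Prim} (h : cuspRel N v w) : toSig N hN v = toSig N hN w := by
  unfold toSig
  exact sig_eq (F := fun d => Nat.gcd d (N / d))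
    (z₁ := v.1.1 * (v.1.2 / ((dd N v.1.2 : ℕ) : ℤ)))
    (z₂ := w.1.1 * (w.1.2 / ((dd N w.1.2 : ℕ) : ℤ))) _ _
    (IsUnit.unit_spec _) (IsUnit.unit_spec _) (rel_d_eq N h)
    (key_dvd N hN h (rel_d_eq N h))

lemma normalize (hN : N ≠ 0) (v : Prim) {d : ℕ} (hd : d = dd N v.1.2) :
    ∃ (b : ℤ) (hb : IsCoprime b ((d : ℕ) : ℤ)), cuspRel N v ⟨((b : ℤ), ((d : ℕ) : ℤ)), hb⟩ := by
  subst hd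
  set a : ℤ := v.1.1 with ha
  set c : ℤ := v.1.2 with hc
  set D : ℕ := dd N c with hD
  set n₁ : ℕ := N / D with hn₁
  set c₁ : ℤ := c / (D : ℤ) with hc₁
  have hD0 : (D : ℤ) ≠ 0 := by exact_mod_cast dd_ne_zero N hN c
  have hNeq : (N : ℤ) = (D : ℤ) * (n₁ : ℤ) := N_eq N c
  have hceq : c = (D : ℤ) * c₁ := c_eq N c
  have hn₁0 : n₁ ≠ 0 := by
    intro h0
    apply hN
    have := Nat.div_mul_cancel (dd_dvd N c)
    rw [← hn₁, h0, zero_mul] at this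
    exact this.symm
  by_cases ha0 : a = 0
  · -- c is a unit
    have hcu : IsUnit c := isCoprime_zero_left.mp (by rw [← ha0]; exact v.2)
    have hcc : c * c = 1 := by
      rcases Int.isUnit_iff.mp hcu with h | h <;> rw [h] <;> norm_num
    have hD1 : D = 1 := by
      have : c.natAbs = 1 := Int.isUnit_iff_natAbs_eq.mp hcu
      rw [hD, dd, Int.gcd, this, Nat.gcd_one_left]
    refine ⟨0, ?_, ?_⟩
    · rw [hD1]; exact isCoprime_zero_left.mpr isUnit_one
    · apply cuspRel_of N _ _ c 0 0 c
      · linear_combination hcc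
      · rw [← ha, ← hc, ha0]; ring
      · simp only [mul_zero, zero_mul, zero_add, hD1]
        push_cast
        linear_combination hcc
  · -- main case
    have hcopc1n1 : IsCoprime c₁ ((n₁ : ℕ) : ℤ) := cop_c1_n1 N hN c
    have hac1 : IsCoprime a c₁ := v.2.of_isCoprime_of_dvd_right ⟨(D : ℤ), by rw [← hc, hceq]; ring⟩
    have hcop : IsCoprime ((n₁ : ℤ) * a) c₁ := hcopc1n1.symm.mul_left hac1
    obtain ⟨z₀, w₀, hzw⟩ := hcop
    have hw₀m : IsCoprime w₀ ((n₁ : ℤ) * a) := ⟨c₁, z₀, by linarith⟩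
    have hm0 : (n₁ : ℤ) * a ≠ 0 := by
      apply mul_ne_zero _ ha0
      exact_mod_cast hn₁0
    obtain ⟨t, ht⟩ := exists_shift_coprime w₀ ((n₁ : ℤ) * a) N hw₀m hm0 hN
    set w₁ : ℤ := w₀ + t * ((n₁ : ℤ) * a) with hw₁
    set z₁ : ℤ := z₀ - t * c₁ with hz₁
    have hzw1 : z₁ * ((n₁ : ℤ) * a) + w₁ * c₁ = 1 := by
      rw [hw₁, hz₁]; linear_combination hzw
    have hwz : IsCoprime ((N : ℤ) * z₁) w₁ :=
      IsCoprime.mul_left ht.symm ⟨(n₁ : ℤ) * a, c₁, by linarith⟩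
    obtain ⟨p, q, hpq⟩ := hwz
    refine ⟨q * a + (-p) * c, ?_, ?_⟩
    · refine image_isCoprime v.2 (x := q) (y := -p) (z := (N : ℤ) * z₁) (w := w₁)
        ?_ rfl ?_
      · linear_combination hpq
      · linear_combination (D : ℤ) * hzw1 + z₁ * a * hNeq + w₁ * hceq
    · apply cuspRel_of N _ _ q (-p) z₁ w₁
      · linear_combination hpq
      · rfl
      · linear_combination (D : ℤ) * hzw1 + z₁ * a * hNeq + w₁ * hceq

lemma rel_of_same (hN : N ≠ 0) {d : ℕ} (hdN : d ∣ N) {b₁ b₂ : ℤ}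
    (hb₁ : IsCoprime b₁ ((d : ℕ) : ℤ)) (hb₂ : IsCoprime b₂ ((d : ℕ) : ℤ))
    (hg : ((Nat.gcd d (N / d) : ℕ) : ℤ) ∣ b₂ - b₁) :
    cuspRel N ⟨((b₁ : ℤ), ((d : ℕ) : ℤ)), hb₁⟩ ⟨((b₂ : ℤ), ((d : ℕ) : ℤ)), hb₂⟩ := by
  set n₁ := N / d with hn₁
  have hNeq : (N : ℤ) = (d : ℤ) * (n₁ : ℤ) := by
    exact_mod_cast (Nat.mul_div_cancel' hdN).symm
  obtain ⟨m, hm⟩ := hg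
  have hBez : ((Nat.gcd d n₁ : ℕ) : ℤ) = (d : ℤ) * Nat.gcdA d n₁ + (n₁ : ℤ) * Nat.gcdB d n₁ :=
    Nat.gcd_eq_gcd_ab d n₁
  set u : ℤ := Nat.gcdA d n₁
  set v' : ℤ := Nat.gcdB d n₁
  obtain ⟨p, q, hpq⟩ : IsCoprime (b₁ * b₂) ((d : ℕ) : ℤ) := hb₁.mul_left hb₂
  set z : ℤ := m * v' * p with hz
  set y : ℤ := m * u + (n₁ : ℤ) * m * v' * q with hy
  have K : y * (d : ℤ) = b₂ - b₁ - (n₁ : ℤ) * z * b₁ * b₂ := by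
    rw [hy, hz]
    linear_combination (-1 : ℤ) * hm - m * hBez + (n₁ : ℤ) * m * v' * hpq
  apply cuspRel_of N _ _ (1 + (n₁ : ℤ) * z * b₂) y z (1 - (n₁ : ℤ) * z * b₁)
  · linear_combination (-(n₁ : ℤ) * z) * K - y * z * hNeq
  · linear_combination K
  · linear_combination z * b₁ * hNeq

theorem quot_eq (hN : N ≠ 0) {v w : Prim} (h : toSig N hN v = toSig N hN w) :
    Quot.mk (cuspRel N) v = Quot.mk (cuspRel N) w := by
  have hd : dd N v.1.2 = dd N w.1.2 := congrArg (fun p => p.1.1) h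
  obtain ⟨b₁, hb₁, hv⟩ := normalize N hN v rfl
  obtain ⟨b₂, hb₂, hw⟩ := normalize N hN w hd
  have hv' : toSig N hN ⟨((b₁ : ℤ), ((dd N v.1.2 : ℕ) : ℤ)), hb₁⟩
      = toSig N hN ⟨((b₂ : ℤ), ((dd N v.1.2 : ℕ) : ℤ)), hb₂⟩ := by
    rw [← toSig_rel N hN hv, ← toSig_rel N hN hw, h]
  have hnorm : dd N (((dd N v.1.2 : ℕ) : ℤ)) = dd N v.1.2 := dd_natCast N (dd_dvd N v.1.2)
  have hext := sig_eq_extract (F := fun x => Nat.gcd x (N / x))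
      (z₁ := b₁ * (((dd N v.1.2 : ℕ) : ℤ) / ((dd N (((dd N v.1.2 : ℕ) : ℤ)) : ℕ) : ℤ)))
      (z₂ := b₂ * (((dd N v.1.2 : ℕ) : ℤ) / ((dd N (((dd N v.1.2 : ℕ) : ℤ)) : ℕ) : ℤ)))
      (IsUnit.unit_spec _) (IsUnit.unit_spec _) hv'
  obtain ⟨-, hdvd⟩ := hext
  rw [hnorm] at hdvd
  have hD0 : ((dd N v.1.2 : ℕ) : ℤ) ≠ 0 := by exact_mod_cast dd_ne_zero N hN v.1.2
  rw [Int.ediv_self hD0, mul_one, mul_one] at hdvd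
  have hdvd' : ((Nat.gcd (dd N v.1.2) (N / dd N v.1.2) : ℕ) : ℤ) ∣ b₂ - b₁ := by
    have := dvd_neg.mpr hdvd
    rwa [neg_sub] at this
  have hrel := rel_of_same N hN (dd_dvd N v.1.2) hb₁ hb₂ hdvd'
  exact (Quot.sound hv).trans ((Quot.sound hrel).trans (Quot.sound hw).symm)

theorem toSig_surj (hN : N ≠ 0) :
    Function.Surjective (toSig N hN) := by
  rintro ⟨⟨d, hd⟩, u⟩
  have hdN : d ∣ N := (Nat.mem_divisors.mp hd).1
  have hd0 : d ≠ 0 := by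
    rintro rfl
    exact (Nat.mem_divisors.mp hd).2 (Nat.eq_zero_of_zero_dvd hdN)
  haveI : NeZero d := ⟨hd0⟩
  obtain ⟨U, hU⟩ := ZMod.unitsMap_surjective (Nat.gcd_dvd_left d (N / d)) u
  set b : ℕ := (U : ZMod d).val with hbdef
  have hb : Nat.Coprime b d := ZMod.val_coe_unit_coprime U
  have hbd : IsCoprime ((b : ℕ) : ℤ) ((d : ℕ) : ℤ) := by
    rw [Int.isCoprime_iff_gcd_eq_one]
    simpa [Int.gcd] using hb
  refine ⟨⟨(((b : ℕ) : ℤ), ((d : ℕ) : ℤ)), hbd⟩, ?_⟩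
  have hnorm : dd N ((d : ℕ) : ℤ) = d := dd_natCast N hdN
  have hu2 : (u : ZMod (Nat.gcd d (N / d))) = (((b : ℕ) : ℤ) : ZMod (Nat.gcd d (N / d))) := by
    rw [← hU]
    simp only [ZMod.unitsMap_def, Units.coe_map, MonoidHom.coe_coe, ZMod.castHom_apply]
    push_cast
    rw [hbdef, ZMod.natCast_val]
  unfold toSig
  refine sig_eq (F := fun x => Nat.gcd x (N / x))
    (z₁ := ((b : ℕ) : ℤ) * (((d : ℕ) : ℤ) / ((dd N ((d : ℕ) : ℤ) : ℕ) : ℤ)))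
    (z₂ := ((b : ℕ) : ℤ)) _ _ (IsUnit.unit_spec _) hu2 hnorm ?_
  rw [hnorm]
  have hD0 : ((d : ℕ) : ℤ) ≠ 0 := by exact_mod_cast hd0
  rw [Int.ediv_self hD0, mul_one, sub_self]
  exact dvd_zero _

end CuspCount

/-- The number of inequivalent cusps of `Γ₀(N)` equals `∑_{d ∣ N} φ(gcd(d, N/d))`. -/
theorem card_cusps_Gamma0 (N : ℕ) (hN : 1 ≤ N) :
    Nat.card (Quot (cuspRel N)) = ∑ d ∈ N.divisors, Nat.totient (Nat.gcd d (N / d)) := by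
  classical
  have hN0 : N ≠ 0 := by omega
  let f : Quot (cuspRel N) → Σ d : {x // x ∈ N.divisors}, (ZMod (Nat.gcd d.1 (N / d.1)))ˣ :=
    Quot.lift (CuspCount.toSig N hN0) (fun a b h => CuspCount.toSig_rel N hN0 h)
  have hbij : Function.Bijective f := by
    constructor
    · intro p q
      induction p using Quot.ind with
      | _ a =>
      induction q using Quot.ind with
      | _ b =>
      intro h
      exact CuspCount.quot_eq N hN0 h
    · intro s
      obtain ⟨v, hv⟩ := CuspCount.toSig_surj N hN0 s
      exact ⟨Quot.mk _ v, hv⟩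
  rw [Nat.card_congr (Equiv.ofBijective f hbij)]
  haveI inst1 : ∀ i : {x // x ∈ N.divisors}, NeZero (Nat.gcd i.1 (N / i.1)) := by
    intro i
    have h1 : i.1 ∣ N := (Nat.mem_divisors.mp i.2).1
    have h2 : i.1 ≠ 0 := by
      rintro h0
      exact hN0 (Nat.eq_zero_of_zero_dvd (h0 ▸ h1))
    have := Nat.gcd_pos_of_pos_left (N / i.1) (Nat.pos_of_ne_zero h2)
    exact ⟨by omega⟩
  haveI inst2 : ∀ i : {x // x ∈ N.divisors}, Fintype (ZMod (Nat.gcd i.1 (N / i.1)))ˣ := by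
    intro i
    infer_instance
  rw [Nat.card_eq_fintype_card, Fintype.card_sigma]
  have step : ∀ i : {x // x ∈ N.divisors},
      Fintype.card (ZMod (Nat.gcd i.1 (N / i.1)))ˣ = Nat.totient (Nat.gcd i.1 (N / i.1)) := by
    intro i
    exact ZMod.card_units_eq_totient _
  rw [Finset.sum_congr rfl (fun i _ => step i)]
  exact Finset.sum_coe_sort N.divisors (fun d => Nat.totient (Nat.gcd d (N / d)))
end
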